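/- The Gibbs distribution π^η with the groupput throughput T_w = ν_w·c_w satisfies detailed balance with respect to the EconCast-NC transition rates: for all w, w' ∈ W, π_w^η · r(w,w') = π_{w'}^η · r(w',w). -/

import Mathlib

open Finset

inductive NodeState : Type
  | s | l | x
deriving DecidableEq

instance instFintypeNodeState : Fintype NodeState :=
  ⟨{NodeState.s, NodeState.l, NodeState.x}, by intro a; cases a <;> simp⟩

abbrev NetState (N : ℕ) := Fin N → NodeState

/-- Number of nodes in transmit state. -/
def numTransmit {N : ℕ} (w : NetState N) : ℕ :=
  (univ.filter fun i => w i = NodeState.x).card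

/-- Number of nodes in listen state (`c_w`). -/
def numListen {N : ℕ} (w : NetState N) : ℕ :=
  (univ.filter fun i => w i = NodeState.l).card

/-- The (finite) set `W` of collision-free network states. -/
def CF (N : ℕ) : Finset (NetState N) :=
  univ.filter fun w => numTransmit w ≤ 1

/-- Indicator `ν_w` that exactly one node is transmitting. -/
def nu {N : ℕ} (w : NetState N) : ℝ := if numTransmit w = 1 then 1 else 0

/-- Groupput throughput `T_w = ν_w · c_w` of a state. -/
noncomputable def Tg {N : ℕ} (w : NetState N) : ℝ := nu w * (numListen w : ℝ)

/-- The penalty `P_w = Σ_{i: w_i=l} η_i L_i + Σ_{i: w_i=x} η_i X_i`. -/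
noncomputable def penalty {N : ℕ} (η L X : Fin N → ℝ) (w : NetState N) : ℝ :=
  ∑ i ∈ univ.filter (fun i => w i = NodeState.l), η i * L i
  + ∑ i ∈ univ.filter (fun i => w i = NodeState.x), η i * X i

/-- Normalizing constant `Z^η`. -/
noncomputable def Zfun (N : ℕ) (σ : ℝ) (η L X : Fin N → ℝ) (T : NetState N → ℝ) : ℝ :=
  ∑ w ∈ CF N, Real.exp ((T w - penalty η L X w) / σ)

/-- The Gibbs distribution `π^η_w = exp((T_w − P_w)/σ)/Z^η`. -/
noncomputable def gibbs (N : ℕ) (σ : ℝ) (η L X : Fin N → ℝ) (T : NetState N → ℝ)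
    (w : NetState N) : ℝ :=
  Real.exp ((T w - penalty η L X w) / σ) / Zfun N σ η L X T

/-- EconCast-NC (groupput mode) transition rates: from a state with no
transmitter, a sleeping node wakes to listen at rate `exp(−η_i L_i/σ)`, a
listening node goes to sleep at rate `1`, and a listening node `i` starts
transmitting at rate `exp(η_i(L_i − X_i)/σ + c'/σ)` where `c'` is the number of
listeners other than `i`; a transmitting node moves back to listen at rate `1`;
all other rates vanish. -/
noncomputable def rateNC (N : ℕ) (σ : ℝ) (η L X : Fin N → ℝ) (w w' : NetState N) : ℝ :=
  (∑ i : Fin N, if w i = NodeState.s ∧ numTransmit w = 0 ∧ w' = Function.update w i NodeState.l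
      then Real.exp (-(η i * L i) / σ) else 0)
  + (∑ i : Fin N, if w i = NodeState.l ∧ numTransmit w = 0 ∧ w' = Function.update w i NodeState.s
      then 1 else 0)
  + (∑ i : Fin N, if w i = NodeState.l ∧ numTransmit w = 0 ∧ w' = Function.update w i NodeState.x
      then Real.exp (η i * (L i - X i) / σ
        + ((univ.filter fun j => j ≠ i ∧ w j = NodeState.l).card : ℝ) / σ) else 0)
  + (∑ i : Fin N, if w i = NodeState.x ∧ w' = Function.update w i NodeState.l
      then 1 else 0)

section Aux
open Finset Function
variable {N : ℕ}

lemma filter_update_eq (w : NetState N) (i : Fin N) (v a : NodeState) :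
    (univ.filter fun j => Function.update w i v j = a) =
      if v = a then insert i (univ.filter fun j => w j = a)
      else (univ.filter fun j => w j = a).erase i := by
  split_ifs with h
  · subst h
    ext j
    by_cases hj : j = i <;> simp [Function.update_apply, hj]
  · ext j
    by_cases hj : j = i <;> simp [Function.update_apply, hj, h]

lemma numTransmit_update_l (w : NetState N) (i : Fin N) (h : w i ≠ NodeState.x) :
    numTransmit (Function.update w i NodeState.l) = numTransmit w := by
  unfold numTransmit
  rw [filter_update_eq, if_neg (by simp), Finset.erase_eq_of_notMem (by simp [h])]

lemma numTransmit_update_s (w : NetState N) (i : Fin N) (h : w i ≠ NodeState.x) :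
    numTransmit (Function.update w i NodeState.s) = numTransmit w := by
  unfold numTransmit
  rw [filter_update_eq, if_neg (by simp), Finset.erase_eq_of_notMem (by simp [h])]

lemma update_update_self (w : NetState N) (i : Fin N) (v : NodeState) :
    Function.update (Function.update w i v) i (w i) = w := by
  rw [Function.update_idem, Function.update_eq_self]

lemma penalty_update_sl (η L X : Fin N → ℝ) (w : NetState N) (i : Fin N)
    (hs : w i = NodeState.s) :
    penalty η L X (Function.update w i NodeState.l) = penalty η L X w + η i * L i := by
  unfold penalty
  rw [filter_update_eq, filter_update_eq, if_pos rfl, if_neg (by simp),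
    Finset.sum_insert (by simp [hs]), Finset.erase_eq_of_notMem (by simp [hs])]
  ring

lemma penalty_update_lx (η L X : Fin N → ℝ) (w : NetState N) (i : Fin N)
    (hl : w i = NodeState.l) :
    penalty η L X (Function.update w i NodeState.x)
      = penalty η L X w - η i * L i + η i * X i := by
  unfold penalty
  have hmem : i ∈ univ.filter fun j => w j = NodeState.l := by simp [hl]
  have h1 := Finset.add_sum_erase (univ.filter fun j => w j = NodeState.l)
    (fun j => η j * L j) hmem
  rw [filter_update_eq, filter_update_eq, if_neg (by simp), if_pos rfl,
    Finset.sum_insert (by simp [hl])]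
  linarith

lemma Tg_of_nT_ne_one (w : NetState N) (h : numTransmit w ≠ 1) : Tg w = 0 := by
  simp [Tg, nu, h]

lemma pairSL (σ : ℝ) (hσ : σ ≠ 0) (η L X : Fin N → ℝ) (w w' : NetState N) (i : Fin N) :
    Real.exp ((Tg w - penalty η L X w) / σ) *
      (if w i = NodeState.s ∧ numTransmit w = 0 ∧ w' = Function.update w i NodeState.l
        then Real.exp (-(η i * L i) / σ) else 0)
    = Real.exp ((Tg w' - penalty η L X w') / σ) *
      (if w' i = NodeState.l ∧ numTransmit w' = 0 ∧ w = Function.update w' i NodeState.s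
        then (1:ℝ) else 0) := by
  have hiff : (w i = NodeState.s ∧ numTransmit w = 0 ∧ w' = Function.update w i NodeState.l)
      ↔ (w' i = NodeState.l ∧ numTransmit w' = 0 ∧ w = Function.update w' i NodeState.s) := by
    constructor
    · rintro ⟨h1, h2, rfl⟩
      refine ⟨Function.update_self i _ w, ?_, ?_⟩
      · rw [numTransmit_update_l w i (by simp [h1])]; exact h2
      · conv_lhs => rw [← update_update_self w i NodeState.l, h1]
    · rintro ⟨h1, h2, rfl⟩
      refine ⟨Function.update_self i _ w', ?_, ?_⟩
      · rw [numTransmit_update_s w' i (by simp [h1])]; exact h2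
      · conv_lhs => rw [← update_update_self w' i NodeState.s, h1]
  by_cases hc : w i = NodeState.s ∧ numTransmit w = 0 ∧ w' = Function.update w i NodeState.l
  · obtain ⟨h1, h2, h3⟩ := hc
    obtain ⟨h1', h2', h3'⟩ := hiff.mp ⟨h1, h2, h3⟩
    rw [if_pos ⟨h1, h2, h3⟩, if_pos ⟨h1', h2', h3'⟩, mul_one]
    have hT : Tg w = 0 := Tg_of_nT_ne_one w (by omega)
    have hT' : Tg w' = 0 := Tg_of_nT_ne_one w' (by omega)
    have hP : penalty η L X w' = penalty η L X w + η i * L i := by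
      rw [h3]; exact penalty_update_sl η L X w i h1
    rw [← Real.exp_add, hT, hT', hP]
    congr 1
    field_simp
    ring
  · rw [if_neg hc, if_neg (fun h => hc (hiff.mpr h)), mul_zero, mul_zero]

lemma pairLX (σ : ℝ) (hσ : σ ≠ 0) (η L X : Fin N → ℝ) (w w' : NetState N)
    (hw' : numTransmit w' ≤ 1) (i : Fin N) :
    Real.exp ((Tg w - penalty η L X w) / σ) *
      (if w i = NodeState.l ∧ numTransmit w = 0 ∧ w' = Function.update w i NodeState.x
        then Real.exp (η i * (L i - X i) / σ
          + ((univ.filter fun j => j ≠ i ∧ w j = NodeState.l).card : ℝ) / σ) else 0)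
    = Real.exp ((Tg w' - penalty η L X w') / σ) *
      (if w' i = NodeState.x ∧ w = Function.update w' i NodeState.l
        then (1:ℝ) else 0) := by
  have hiff : (w i = NodeState.l ∧ numTransmit w = 0 ∧ w' = Function.update w i NodeState.x)
      ↔ (w' i = NodeState.x ∧ w = Function.update w' i NodeState.l) := by
    constructor
    · rintro ⟨h1, h2, rfl⟩
      refine ⟨Function.update_self i _ w, ?_⟩
      conv_lhs => rw [← update_update_self w i NodeState.x, h1]
    · rintro ⟨h1, rfl⟩
      have hl : Function.update w' i NodeState.l i = NodeState.l := Function.update_self i _ w'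
      refine ⟨hl, ?_, ?_⟩
      · have hmem : i ∈ univ.filter fun j => w' j = NodeState.x := by simp [h1]
        have hcard : 1 ≤ (univ.filter fun j => w' j = NodeState.x).card :=
          Finset.card_pos.mpr ⟨i, hmem⟩
        unfold numTransmit at hw' ⊢
        rw [filter_update_eq, if_neg (by simp), Finset.card_erase_of_mem hmem]
        omega
      · conv_lhs => rw [← update_update_self w' i NodeState.l, h1]
  by_cases hc : w i = NodeState.l ∧ numTransmit w = 0 ∧ w' = Function.update w i NodeState.x
  · obtain ⟨h1, h2, h3⟩ := hc
    obtain ⟨h1', h3'⟩ := hiff.mp ⟨h1, h2, h3⟩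
    rw [if_pos ⟨h1, h2, h3⟩, if_pos ⟨h1', h3'⟩, mul_one]
    have hSx : (univ.filter fun j => w j = NodeState.x) = ∅ := Finset.card_eq_zero.mp h2
    have hnt' : numTransmit w' = 1 := by
      rw [h3]; unfold numTransmit
      rw [filter_update_eq, if_pos rfl, hSx]
      simp
    have hc' : (univ.filter fun j => j ≠ i ∧ w j = NodeState.l).card = numListen w' := by
      rw [h3]; unfold numListen
      rw [filter_update_eq, if_neg (by simp)]
      congr 1
      ext j
      simp [Finset.mem_erase, Finset.mem_filter, and_comm]
    have hT : Tg w = 0 := Tg_of_nT_ne_one w (by omega)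
    have hT' : Tg w' = (numListen w' : ℝ) := by simp [Tg, nu, hnt']
    have hP : penalty η L X w' = penalty η L X w - η i * L i + η i * X i := by
      rw [h3]; exact penalty_update_lx η L X w i h1
    rw [← Real.exp_add, hT, hT', hP, hc']
    congr 1
    field_simp
    ring
  · rw [if_neg hc, if_neg (fun h => hc (hiff.mpr h)), mul_zero, mul_zero]

end Aux

/-- The Gibbs distribution with groupput throughput satisfies
detailed balance w.r.t. the EconCast-NC transition rates. -/
theorem gibbs_detailed_balance_econcastNC_groupput (N : ℕ) (hN : 2 ≤ N)
    (σ : ℝ) (hσ : 0 < σ) (η L X : Fin N → ℝ)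
    (hη : ∀ i, 0 ≤ η i) (hL : ∀ i, 0 < L i) (hX : ∀ i, 0 < X i) :
    ∀ w ∈ CF N, ∀ w' ∈ CF N,
      gibbs N σ η L X Tg w * rateNC N σ η L X w w'
        = gibbs N σ η L X Tg w' * rateNC N σ η L X w' w := by
  
  intro w hw w' hw'
  have hwCF : numTransmit w ≤ 1 := by simpa [CF] using hw
  have hw'CF : numTransmit w' ≤ 1 := by simpa [CF] using hw'
  have hσ' : σ ≠ 0 := ne_of_gt hσ
  suffices h : Real.exp ((Tg w - penalty η L X w) / σ) * rateNC N σ η L X w w'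
      = Real.exp ((Tg w' - penalty η L X w') / σ) * rateNC N σ η L X w' w by
    unfold gibbs
    rw [div_mul_eq_mul_div, div_mul_eq_mul_div, h]
  have HA : Real.exp ((Tg w - penalty η L X w) / σ) *
      (∑ i : Fin N, if w i = NodeState.s ∧ numTransmit w = 0 ∧
          w' = Function.update w i NodeState.l
        then Real.exp (-(η i * L i) / σ) else 0)
      = Real.exp ((Tg w' - penalty η L X w') / σ) *
      (∑ i : Fin N, if w' i = NodeState.l ∧ numTransmit w' = 0 ∧
          w = Function.update w' i NodeState.s then (1:ℝ) else 0) := by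
    rw [Finset.mul_sum, Finset.mul_sum]
    exact Finset.sum_congr rfl fun i _ => pairSL σ hσ' η L X w w' i
  have HB : Real.exp ((Tg w - penalty η L X w) / σ) *
      (∑ i : Fin N, if w i = NodeState.l ∧ numTransmit w = 0 ∧
          w' = Function.update w i NodeState.s then (1:ℝ) else 0)
      = Real.exp ((Tg w' - penalty η L X w') / σ) *
      (∑ i : Fin N, if w' i = NodeState.s ∧ numTransmit w' = 0 ∧
          w = Function.update w' i NodeState.l
        then Real.exp (-(η i * L i) / σ) else 0) := by
    rw [Finset.mul_sum, Finset.mul_sum]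
    exact Finset.sum_congr rfl fun i _ => (pairSL σ hσ' η L X w' w i).symm
  have HC : Real.exp ((Tg w - penalty η L X w) / σ) *
      (∑ i : Fin N, if w i = NodeState.l ∧ numTransmit w = 0 ∧
          w' = Function.update w i NodeState.x
        then Real.exp (η i * (L i - X i) / σ
          + ((univ.filter fun j => j ≠ i ∧ w j = NodeState.l).card : ℝ) / σ) else 0)
      = Real.exp ((Tg w' - penalty η L X w') / σ) *
      (∑ i : Fin N, if w' i = NodeState.x ∧ w = Function.update w' i NodeState.l
        then (1:ℝ) else 0) := by
    rw [Finset.mul_sum, Finset.mul_sum]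
    exact Finset.sum_congr rfl fun i _ => pairLX σ hσ' η L X w w' hw'CF i
  have HD : Real.exp ((Tg w - penalty η L X w) / σ) *
      (∑ i : Fin N, if w i = NodeState.x ∧ w' = Function.update w i NodeState.l
        then (1:ℝ) else 0)
      = Real.exp ((Tg w' - penalty η L X w') / σ) *
      (∑ i : Fin N, if w' i = NodeState.l ∧ numTransmit w' = 0 ∧
          w = Function.update w' i NodeState.x
        then Real.exp (η i * (L i - X i) / σ
          + ((univ.filter fun j => j ≠ i ∧ w' j = NodeState.l).card : ℝ) / σ) else 0) := by
    rw [Finset.mul_sum, Finset.mul_sum]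
    exact Finset.sum_congr rfl fun i _ => (pairLX σ hσ' η L X w' w hwCF i).symm
  unfold rateNC
  rw [mul_add, mul_add, mul_add, mul_add, mul_add, mul_add]
  linarith [HA, HB, HC, HD]
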